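/- Every positive ray through the origin in the space H(D) of Hölder distributions intersects the image L(T(D)) of the universal Teichmüller space under the Liouville map in at most one point. -/

import Mathlib

open Complex MeasureTheory

/-- The angle metric on the unit circle. -/
noncomputable def dCircle (x y : ℂ) : ℝ := |Complex.arg (x * (starRingEnd ℂ) y)|

/-- A quasisymmetric homeomorphism of the unit circle: a homeomorphism of `S¹` distorting
symmetric pairs of adjacent arcs by a bounded factor (in the angle metric). -/
def QS (h : ℂ → ℂ) : Prop :=
  Set.BijOn h (Metric.sphere 0 1) (Metric.sphere 0 1) ∧
  ContinuousOn h (Metric.sphere 0 1) ∧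
  ∃ M : ℝ, 1 ≤ M ∧ ∀ θ t : ℝ, 0 < t → t ≤ Real.pi / 2 →
    dCircle (h (Complex.exp ((θ + t) * Complex.I))) (h (Complex.exp (θ * Complex.I))) ≤
      M * dCircle (h (Complex.exp (θ * Complex.I))) (h (Complex.exp ((θ - t) * Complex.I)))

/-- The Liouville measure on the space of geodesics of the unit disk, realized as the
measure on pairs of circle points with density `dα dβ / |e^{iα} - e^{iβ}|²`. -/
noncomputable def LiouvilleM : Measure (ℂ × ℂ) :=
  Measure.map (fun p : ℝ × ℝ => (Complex.exp (p.1 * Complex.I), Complex.exp (p.2 * Complex.I)))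
    ((volume.restrict (Set.Ico 0 (2 * Real.pi) ×ˢ Set.Ico 0 (2 * Real.pi))).withDensity
      (fun p : ℝ × ℝ => ENNReal.ofReal
        (1 / (‖Complex.exp (p.1 * Complex.I) - Complex.exp (p.2 * Complex.I)‖)^2)))


noncomputable section
namespace RayL
open Real Set
def E (θ : ℝ) : ℂ := Complex.exp (θ * Complex.I)
lemma E_eq_iff {x y : ℝ} : E x = E y ↔ ∃ n : ℤ, x = y + n * (2*π) := by
  rw [E, E, Complex.exp_eq_exp_iff_exists_int]
  constructor
  · rintro ⟨n, hn⟩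
    have h2 := congrArg Complex.im hn
    simp at h2
    exact ⟨n, by linarith [h2]⟩
  · rintro ⟨n, hn⟩
    exact ⟨n, by rw [hn]; push_cast; ring⟩

lemma E_inj {x y : ℝ} (h : E x = E y) (hd : |x - y| < 2*π) : x = y := by
  obtain ⟨n, hn⟩ := E_eq_iff.mp h
  have hπ := Real.pi_pos
  have h2 : |(n:ℝ)| * (2*π) < 2*π := by
    rwa [hn, add_sub_cancel_left, abs_mul, abs_of_pos (by linarith : (0:ℝ) < 2*π)] at hd
  have habs : |(n:ℝ)| < 1 := by nlinarith [abs_nonneg ((n:ℝ))]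
  have hn0 : n = 0 := by
    have h3 : ((|n| : ℤ) : ℝ) < 1 := by rwa [Int.cast_abs]
    have h4 : |n| < 1 := by exact_mod_cast h3
    rw [abs_lt] at h4
    omega
  rw [hn, hn0]; push_cast; ring

lemma E_ne {x y : ℝ} (hd : |x - y| < 2*π) (hxy : x ≠ y) : E x ≠ E y :=
  fun h => hxy (E_inj h hd)

lemma E_inj' {x y : ℝ} (hx : x ∈ Icc 0 (2*π)) (hy : y ∈ Icc 0 (2*π)) (h : E x = E y) :
    x = y ∨ (x = 0 ∧ y = 2*π) ∨ (x = 2*π ∧ y = 0) := by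
  obtain ⟨n, hn⟩ := E_eq_iff.mp h
  have hπ := Real.pi_pos
  obtain ⟨hx0, hx2⟩ := hx
  obtain ⟨hy0, hy2⟩ := hy
  have hb1 : (-1 : ℝ) ≤ n := by nlinarith
  have hb2 : (n : ℝ) ≤ 1 := by nlinarith
  have hb1' : (-1 : ℤ) ≤ n := by exact_mod_cast hb1
  have hb2' : n ≤ (1 : ℤ) := by exact_mod_cast hb2
  interval_cases n
  · right; left
    push_cast at hn
    constructor <;> nlinarith
  · left; push_cast at hn; linarith
  · right; right
    push_cast at hn
    constructor <;> nlinarith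

lemma E_def' (θ : ℝ) : E θ = (Real.cos θ : ℂ) + (Real.sin θ : ℂ) * Complex.I := by
  rw [E, Complex.exp_mul_I]; norm_cast

lemma abs_E (θ : ℝ) : ‖E θ‖ = 1 := Complex.norm_exp_ofReal_mul_I θ

lemma E_mem_sphere (θ : ℝ) : E θ ∈ Metric.sphere (0:ℂ) 1 := by
  simp [mem_sphere_iff_norm, abs_E]

lemma E_add (x y : ℝ) : E (x + y) = E x * E y := by
  rw [E, E, E, ← Complex.exp_add]; push_cast; ring_nf

lemma E_zero : E 0 = 1 := by simp [E]
lemma E_pi : E π = -1 := by rw [E]; exact_mod_cast Complex.exp_pi_mul_I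
lemma E_pi_div_two : E (π/2) = Complex.I := by rw [E_def']; simp
lemma E_two_pi : E (2*π) = 1 := by
  have h : (2:ℝ)*π = π + π := by ring
  rw [h, E_add, E_pi]; ring
lemma E_three_pi_div_two : E (3*π/2) = -Complex.I := by
  have h : (3:ℝ)*π/2 = π + π/2 := by ring
  rw [h, E_add, E_pi, E_pi_div_two]; ring

lemma arg_E {θ : ℝ} (h1 : -π < θ) (h2 : θ ≤ π) : (E θ).arg = θ := by
  rw [E_def', Complex.ofReal_cos, Complex.ofReal_sin]
  exact Complex.arg_cos_add_sin_mul_I ⟨h1, h2⟩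

lemma E_arg {z : ℂ} (hz : z ∈ Metric.sphere (0:ℂ) 1) : E z.arg = z := by
  have habs : ‖z‖ = 1 := by
    simpa [mem_sphere_iff_norm] using hz
  have := Complex.norm_mul_exp_arg_mul_I z
  rw [habs] at this
  simpa [E] using this

/-- the branch of angle centered so that it is continuous away from `E c`. -/
def Phi (c : ℝ) (z : ℂ) : ℝ := c + π + Complex.arg (-(z * E (-c)))

lemma Phi_E {c θ : ℝ} (h1 : c < θ) (h2 : θ < c + 2*π) : Phi c (E θ) = θ := by
  have hπ := Real.pi_pos
  have key : -(E θ * E (-c)) = E (θ - c - π) := by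
    have : E (θ - c - π) = E (θ - c) * E (-π) := by rw [← E_add]; ring_nf
    rw [this]
    have hπ' : E (-π) = -1 := by
      have : E (-π) * E π = 1 := by rw [← E_add]; simp [E_zero]
      rw [E_pi] at this
      linear_combination -this
    rw [hπ']
    rw [← E_add]
    ring_nf
  rw [Phi, key, arg_E (by linarith) (by linarith)]
  ring

lemma Phi_inv {c s : ℝ} {z : ℂ} (hz : z ∈ Metric.sphere (0:ℂ) 1) (h : Phi c z = s) :
    z = E s := by
  have h1 : Complex.arg (-(z * E (-c))) = s - c - π := by rw [Phi] at h; linarith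
  have habs : -(z * E (-c)) ∈ Metric.sphere (0:ℂ) 1 := by
    simp only [mem_sphere_iff_norm, sub_zero] at hz ⊢
    rw [norm_neg, norm_mul, hz, abs_E, one_mul]
  have h2 : E (s - c - π) = -(z * E (-c)) := by rw [← h1]; exact E_arg habs
  have h3 : E (s - c - π) * E (c + π) = -(z * E (-c)) * E (c + π) := by rw [h2]
  rw [← E_add] at h3
  have h4 : s - c - π + (c + π) = s := by ring
  rw [h4] at h3
  have h5 : E π = -1 := E_pi
  have h6 : -(z * E (-c)) * E (c + π) = z := by
    rw [E_add, E_pi]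
    have hcc : E (-c) * E c = 1 := by rw [← E_add]; simp [E_zero]
    linear_combination z * hcc
  rw [h3, h6]


lemma E_surj {z : ℂ} (hz : z ∈ Metric.sphere (0:ℂ) 1) :
    ∃ θ ∈ Ico 0 (2*π), E θ = z := by
  have hπ := Real.pi_pos
  have harg := Complex.arg_mem_Ioc z
  rcases le_or_gt 0 z.arg with h0 | h0
  · exact ⟨z.arg, ⟨h0, by linarith [harg.2]⟩, E_arg hz⟩
  · refine ⟨z.arg + 2*π, ⟨by linarith [harg.1], by linarith⟩, ?_⟩
    rw [E_add, E_two_pi, mul_one]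
    exact E_arg hz

lemma mem_slitPlane_of_unit {w : ℂ} (habs : ‖w‖ = 1) (hne : w ≠ -1) :
    w ∈ Complex.slitPlane := by
  rw [Complex.mem_slitPlane_iff]
  by_cases him : w.im = 0
  · left
    have hw : w = (w.re : ℂ) := by
      apply Complex.ext <;> simp [him]
    rw [hw] at habs
    rw [Complex.norm_real, Real.norm_eq_abs] at habs
    rcases abs_eq (by norm_num : (0:ℝ) ≤ 1) |>.mp habs with h | h
    · rw [hw, h]; norm_num
    · exfalso; apply hne; rw [hw, h]; norm_num
  · right; exact him

lemma Phi_continuousOn (c : ℝ) :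
    ContinuousOn (Phi c) (Metric.sphere (0:ℂ) 1 \ {E c}) := by
  apply ContinuousOn.add continuousOn_const
  intro z hz
  obtain ⟨hzs, hzc⟩ := hz
  have hmem : -(z * E (-c)) ∈ Complex.slitPlane := by
    apply mem_slitPlane_of_unit
    · simp only [mem_sphere_iff_norm, sub_zero] at hzs
      rw [norm_neg, norm_mul, hzs, abs_E, one_mul]
    · intro hcon
      apply hzc
      have h1 : z * E (-c) = 1 := by linear_combination -hcon
      have h2 : z * E (-c) * E c = E c := by rw [h1, one_mul]
      rw [mul_assoc, ← E_add] at h2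
      simp only [neg_add_cancel, E_zero, mul_one] at h2
      simp [h2]
  have hc2 : ContinuousAt (fun w : ℂ => -(w * E (-c))) z :=
    (continuous_neg.comp (continuous_id.mul continuous_const)).continuousAt
  exact (ContinuousAt.comp (x := z) (g := Complex.arg) (f := fun w : ℂ => -(w * E (-c))) (Complex.continuousAt_arg hmem) hc2).continuousWithinAt

/-- Key covering lemma: a continuous circle map sending `E a ↦ E a'`, `E b ↦ E b'` and
avoiding `E c` on the arc covers the arc from `E a'` to `E b'`. -/
lemma cover {h : ℂ → ℂ} (hm : Set.MapsTo h (Metric.sphere 0 1) (Metric.sphere 0 1))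
    (hc : ContinuousOn h (Metric.sphere 0 1))
    {c a b a' b' : ℝ} (hca : c < a) (hab : a ≤ b) (hbc : b < c + 2*π)
    (hca' : c < a') (ha'b' : a' ≤ b') (hbc' : b' < c + 2*π)
    (hEa : h (E a) = E a') (hEb : h (E b) = E b')
    (havoid : ∀ t ∈ Set.Icc a b, h (E t) ≠ E c) :
    ∀ s ∈ Set.Icc a' b', ∃ t ∈ Set.Icc a b, h (E t) = E s := by
  set g : ℝ → ℝ := fun t => Phi c (h (E t)) with hg
  have hEcont : Continuous E := by
    unfold E
    exact Complex.continuous_exp.comp ((Complex.continuous_ofReal).mul continuous_const)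
  have hgc : ContinuousOn g (Set.Icc a b) := by
    apply (Phi_continuousOn c).comp (hc.comp hEcont.continuousOn ?_) ?_
    · intro t _
      exact E_mem_sphere t
    · intro t ht
      exact ⟨hm (E_mem_sphere t), by simpa using havoid t ht⟩
  have hga : g a = a' := by rw [hg]; simp only; rw [hEa, Phi_E hca' (by linarith)]
  have hgb : g b = b' := by rw [hg]; simp only; rw [hEb, Phi_E (by linarith) hbc']
  intro s hs
  have := intermediate_value_Icc hab hgc
  rw [hga, hgb] at this
  obtain ⟨t, ht, hgt⟩ := this hs
  exact ⟨t, ht, Phi_inv (hm (E_mem_sphere t)) hgt⟩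


lemma E_neg_pi : E (-π) = -1 := by
  rw [E_def']; simp

def arc (u v : ℝ) : Set ℂ := E '' Icc u v

lemma arc_subset_sphere (u v : ℝ) : arc u v ⊆ Metric.sphere (0:ℂ) 1 := by
  rintro z ⟨t, _, rfl⟩; exact E_mem_sphere t

lemma key_sets {h : ℂ → ℂ}
    (hb : Set.BijOn h (Metric.sphere 0 1) (Metric.sphere 0 1))
    (hc : ContinuousOn h (Metric.sphere 0 1))
    (f1 : h 1 = 1) (fI : h Complex.I = Complex.I) (fm : h (-1) = -1) :
    ∃ ψ : ℝ, π < ψ ∧ ψ < 2*π ∧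
      (∀ x ∈ Metric.sphere (0:ℂ) 1, (h x ∈ arc 0 (π/2) ↔ x ∈ arc 0 (π/2))) ∧
      (∀ x ∈ Metric.sphere (0:ℂ) 1, (h x ∈ arc (π/2) π ↔ x ∈ arc (π/2) π)) ∧
      (∀ x ∈ Metric.sphere (0:ℂ) 1, (h x ∈ arc π (3*π/2) ↔ x ∈ arc π ψ)) ∧
      (∀ x ∈ Metric.sphere (0:ℂ) 1, (h x ∈ arc (3*π/2) (2*π) ↔ x ∈ arc ψ (2*π))) := by
  have hπ := Real.pi_pos
  have hm := hb.mapsTo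
  have hinj := hb.injOn
  have hE0 : h (E 0) = E 0 := by rw [E_zero]; exact f1
  have hEhalf : h (E (π/2)) = E (π/2) := by rw [E_pi_div_two]; exact fI
  have hEpi : h (E π) = E π := by rw [E_pi]; exact fm
  have hE2pi : h (E (2*π)) = E (2*π) := by rw [E_two_pi]; exact f1
  have avoid : ∀ c t : ℝ, h (E c) = E c → |t - c| < 2*π → t ≠ c → h (E t) ≠ E c := by
    intro c t hfix hd hne hcon
    exact E_ne hd hne (hinj (E_mem_sphere t) (E_mem_sphere c) (hcon.trans hfix.symm))
  have hEnegpi : h (E (-π)) = E (-π) := by rw [E_neg_pi]; exact fm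
  -- the five covering facts
  have cov1 : ∀ s ∈ Icc 0 (π/2), ∃ t ∈ Icc 0 (π/2), h (E t) = E s := by
    refine cover hm hc (c := -π) (by linarith) (by linarith) (by linarith)
      (by linarith) (by linarith) (by linarith) hE0 hEhalf ?_
    intro t ht
    exact avoid (-π) t hEnegpi (by rw [abs_lt]; constructor <;> linarith [ht.1, ht.2])
      (by intro hcon; rw [hcon] at ht; linarith [ht.1])
  have cov2 : ∀ s ∈ Icc (π/2) π, ∃ t ∈ Icc (π/2) π, h (E t) = E s := by
    refine cover hm hc (c := 0) (by linarith) (by linarith) (by linarith)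
      (by linarith) (by linarith) (by linarith) hEhalf hEpi ?_
    intro t ht
    exact avoid 0 t hE0 (by rw [abs_lt]; constructor <;> linarith [ht.1, ht.2])
      (by intro hcon; rw [hcon] at ht; linarith [ht.1])
  have cov3 : ∀ s ∈ Icc π (2*π), ∃ t ∈ Icc π (2*π), h (E t) = E s := by
    refine cover hm hc (c := π/2) (by linarith) (by linarith) (by linarith)
      (by linarith) (by linarith) (by linarith) hEpi hE2pi ?_
    intro t ht
    exact avoid (π/2) t hEhalf (by rw [abs_lt]; constructor <;> linarith [ht.1, ht.2])
      (by intro hcon; rw [hcon] at ht; linarith [ht.1])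
  -- extract ψ
  obtain ⟨ψ, hψmem, hψ⟩ := cov3 (3*π/2) ⟨by linarith, by linarith⟩
  have hψpi : π < ψ := by
    rcases lt_or_eq_of_le hψmem.1 with h' | h'
    · exact h'
    · exfalso
      rw [← h'] at hψ
      have : E π = E (3*π/2) := hEpi.symm.trans hψ
      have := E_inj this (by rw [abs_lt]; constructor <;> linarith)
      linarith
  have hψ2pi : ψ < 2*π := by
    rcases lt_or_eq_of_le hψmem.2 with h' | h'
    · exact h'
    · exfalso
      rw [h'] at hψ
      have : E (2*π) = E (3*π/2) := hE2pi.symm.trans hψ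
      have := E_inj this (by rw [abs_lt]; constructor <;> linarith)
      linarith
  have cov4 : ∀ s ∈ Icc π (3*π/2), ∃ t ∈ Icc π ψ, h (E t) = E s := by
    refine cover hm hc (c := π/2) (by linarith) (by linarith) (by linarith)
      (by linarith) (by linarith) (by linarith) hEpi hψ ?_
    intro t ht
    exact avoid (π/2) t hEhalf (by rw [abs_lt]; constructor <;> linarith [ht.1, ht.2])
      (by intro hcon; rw [hcon] at ht; linarith [ht.1])
  have cov5 : ∀ s ∈ Icc (3*π/2) (2*π), ∃ t ∈ Icc ψ (2*π), h (E t) = E s := by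
    refine cover hm hc (c := π/2) (by linarith) (by linarith) (by linarith)
      (by linarith) (by linarith) (by linarith) hψ hE2pi ?_
    intro t ht
    exact avoid (π/2) t hEhalf (by rw [abs_lt]; constructor <;> linarith [ht.1, ht.2])
      (by intro hcon; rw [hcon] at ht; linarith [ht.1])
  -- forward implications
  have fwd : ∀ (a b a' b' : ℝ),
      (∀ s ∈ Icc a' b', ∃ t ∈ Icc a b, h (E t) = E s) →
      ∀ x ∈ Metric.sphere (0:ℂ) 1, h x ∈ arc a' b' → x ∈ arc a b := by
    rintro a b a' b' cov x hx ⟨s, hs, hsx⟩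
    obtain ⟨t, ht, hts⟩ := cov s hs
    exact ⟨t, ht, hinj (E_mem_sphere t) hx (by rw [hts, hsx])⟩
  have hcases : ∀ s : ℝ, s ∈ Ico 0 (2*π) → s ∈ Icc 0 (π/2) ∨ s ∈ Icc (π/2) π ∨
      s ∈ Icc π (3*π/2) ∨ s ∈ Icc (3*π/2) (2*π) := by
    intro s hs
    rcases le_or_gt s (π/2) with h' | h'
    · exact Or.inl ⟨hs.1, h'⟩
    rcases le_or_gt s π with h'' | h''
    · exact Or.inr (Or.inl ⟨le_of_lt h', h''⟩)
    rcases le_or_gt s (3*π/2) with h3 | h3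
    · exact Or.inr (Or.inr (Or.inl ⟨le_of_lt h'', h3⟩))
    · exact Or.inr (Or.inr (Or.inr ⟨le_of_lt h3, le_of_lt hs.2⟩))
  refine ⟨ψ, hψpi, hψ2pi, ?_, ?_, ?_, ?_⟩
  · -- arc 0 (π/2)
    intro x hx
    refine ⟨fun hhx => fwd _ _ _ _ cov1 x hx hhx, ?_⟩
    rintro ⟨u, hu, hux⟩
    obtain ⟨s, hs, hsx⟩ := E_surj (hm hx)
    rcases hcases s hs with hk | hk | hk | hk
    · exact ⟨s, hk, hsx⟩
    · obtain ⟨u', hu', hux'⟩ := fwd _ _ _ _ cov2 x hx ⟨s, hk, hsx⟩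
      rcases E_inj' (⟨hu.1, by linarith [hu.2]⟩ : u ∈ Icc 0 (2*π))
          (⟨by linarith [hu'.1], by linarith [hu'.2]⟩ : u' ∈ Icc 0 (2*π))
          (hux.trans hux'.symm) with heq | ⟨h1, h2⟩ | ⟨h1, h2⟩
      · have hu2 : u = π/2 := le_antisymm hu.2 (heq ▸ hu'.1)
        rw [← hux, hu2, hEhalf]
        exact ⟨π/2, ⟨by linarith, le_refl _⟩, rfl⟩
      · exfalso; linarith [hu'.2]
      · exfalso; linarith [hu.2]
    · obtain ⟨u', hu', hux'⟩ := fwd _ _ _ _ cov4 x hx ⟨s, hk, hsx⟩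
      rcases E_inj' (⟨hu.1, by linarith [hu.2]⟩ : u ∈ Icc 0 (2*π))
          (⟨by linarith [hu'.1], by linarith [hu'.2]⟩ : u' ∈ Icc 0 (2*π))
          (hux.trans hux'.symm) with heq | ⟨h1, h2⟩ | ⟨h1, h2⟩
      · exfalso; linarith [hu.2, hu'.1, heq]
      · exfalso; linarith [hu'.2]
      · exfalso; linarith [hu.2]
    · obtain ⟨u', hu', hux'⟩ := fwd _ _ _ _ cov5 x hx ⟨s, hk, hsx⟩
      rcases E_inj' (⟨hu.1, by linarith [hu.2]⟩ : u ∈ Icc 0 (2*π))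
          (⟨hu'.1.trans' (by linarith), hu'.2⟩ : u' ∈ Icc 0 (2*π))
          (hux.trans hux'.symm) with heq | ⟨h1, h2⟩ | ⟨h1, h2⟩
      · exfalso; linarith [hu.2, hu'.1, heq]
      · rw [← hux', h2, hE2pi, E_two_pi, ← E_zero]
        exact ⟨0, ⟨le_refl _, by linarith⟩, rfl⟩
      · exfalso; linarith [hu.2]
  · -- arc (π/2) π
    intro x hx
    refine ⟨fun hhx => fwd _ _ _ _ cov2 x hx hhx, ?_⟩
    rintro ⟨u, hu, hux⟩
    obtain ⟨s, hs, hsx⟩ := E_surj (hm hx)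
    rcases hcases s hs with hk | hk | hk | hk
    · obtain ⟨u', hu', hux'⟩ := fwd _ _ _ _ cov1 x hx ⟨s, hk, hsx⟩
      rcases E_inj' (⟨by linarith [hu.1], by linarith [hu.2]⟩ : u ∈ Icc 0 (2*π))
          (⟨hu'.1, by linarith [hu'.2]⟩ : u' ∈ Icc 0 (2*π))
          (hux.trans hux'.symm) with heq | ⟨h1, h2⟩ | ⟨h1, h2⟩
      · have hu2 : u = π/2 := le_antisymm (heq ▸ hu'.2) hu.1
        rw [← hux, hu2, hEhalf]
        exact ⟨π/2, ⟨le_refl _, by linarith⟩, rfl⟩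
      · exfalso; linarith [hu.1]
      · exfalso; linarith [hu.2]
    · exact ⟨s, hk, hsx⟩
    · obtain ⟨u', hu', hux'⟩ := fwd _ _ _ _ cov4 x hx ⟨s, hk, hsx⟩
      rcases E_inj' (⟨by linarith [hu.1], by linarith [hu.2]⟩ : u ∈ Icc 0 (2*π))
          (⟨by linarith [hu'.1], by linarith [hu'.2]⟩ : u' ∈ Icc 0 (2*π))
          (hux.trans hux'.symm) with heq | ⟨h1, h2⟩ | ⟨h1, h2⟩
      · have hu2 : u = π := le_antisymm hu.2 (heq ▸ hu'.1)
        rw [← hux, hu2, hEpi]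
        exact ⟨π, ⟨by linarith, le_refl _⟩, rfl⟩
      · exfalso; linarith [hu.1]
      · exfalso; linarith [hu.2]
    · obtain ⟨u', hu', hux'⟩ := fwd _ _ _ _ cov5 x hx ⟨s, hk, hsx⟩
      rcases E_inj' (⟨by linarith [hu.1], by linarith [hu.2]⟩ : u ∈ Icc 0 (2*π))
          (⟨hu'.1.trans' (by linarith), hu'.2⟩ : u' ∈ Icc 0 (2*π))
          (hux.trans hux'.symm) with heq | ⟨h1, h2⟩ | ⟨h1, h2⟩
      · exfalso; linarith [hu.2, hu'.1, heq]
      · exfalso; linarith [hu.1]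
      · exfalso; linarith [hu.2]
  · -- arc π (3π/2) ↔ arc π ψ
    intro x hx
    refine ⟨fun hhx => fwd _ _ _ _ cov4 x hx hhx, ?_⟩
    rintro ⟨u, hu, hux⟩
    obtain ⟨s, hs, hsx⟩ := E_surj (hm hx)
    rcases hcases s hs with hk | hk | hk | hk
    · obtain ⟨u', hu', hux'⟩ := fwd _ _ _ _ cov1 x hx ⟨s, hk, hsx⟩
      rcases E_inj' (⟨by linarith [hu.1], by linarith [hu.2]⟩ : u ∈ Icc 0 (2*π))
          (⟨hu'.1, by linarith [hu'.2]⟩ : u' ∈ Icc 0 (2*π))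
          (hux.trans hux'.symm) with heq | ⟨h1, h2⟩ | ⟨h1, h2⟩
      · exfalso; linarith [hu.1, hu'.2, heq]
      · exfalso; linarith [hu.1]
      · exfalso; linarith [hu.2]
    · obtain ⟨u', hu', hux'⟩ := fwd _ _ _ _ cov2 x hx ⟨s, hk, hsx⟩
      rcases E_inj' (⟨by linarith [hu.1], by linarith [hu.2]⟩ : u ∈ Icc 0 (2*π))
          (⟨by linarith [hu'.1], by linarith [hu'.2]⟩ : u' ∈ Icc 0 (2*π))
          (hux.trans hux'.symm) with heq | ⟨h1, h2⟩ | ⟨h1, h2⟩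
      · have hu2 : u = π := le_antisymm (heq ▸ hu'.2) hu.1
        rw [← hux, hu2, hEpi]
        exact ⟨π, ⟨le_refl _, by linarith⟩, rfl⟩
      · exfalso; linarith [hu.1]
      · exfalso; linarith [hu.2]
    · exact ⟨s, hk, hsx⟩
    · obtain ⟨u', hu', hux'⟩ := fwd _ _ _ _ cov5 x hx ⟨s, hk, hsx⟩
      rcases E_inj' (⟨by linarith [hu.1], by linarith [hu.2]⟩ : u ∈ Icc 0 (2*π))
          (⟨hu'.1.trans' (by linarith), hu'.2⟩ : u' ∈ Icc 0 (2*π))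
          (hux.trans hux'.symm) with heq | ⟨h1, h2⟩ | ⟨h1, h2⟩
      · have hu2 : u = ψ := le_antisymm hu.2 (heq ▸ hu'.1)
        rw [← hux, hu2, hψ]
        exact ⟨3*π/2, ⟨by linarith, le_refl _⟩, rfl⟩
      · exfalso; linarith [hu.1]
      · exfalso; linarith [hu.2]
  · -- arc (3π/2) (2π) ↔ arc ψ (2π)
    intro x hx
    refine ⟨fun hhx => fwd _ _ _ _ cov5 x hx hhx, ?_⟩
    rintro ⟨u, hu, hux⟩
    obtain ⟨s, hs, hsx⟩ := E_surj (hm hx)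
    rcases hcases s hs with hk | hk | hk | hk
    · obtain ⟨u', hu', hux'⟩ := fwd _ _ _ _ cov1 x hx ⟨s, hk, hsx⟩
      rcases E_inj' (⟨by linarith [hu.1], hu.2⟩ : u ∈ Icc 0 (2*π))
          (⟨hu'.1, by linarith [hu'.2]⟩ : u' ∈ Icc 0 (2*π))
          (hux.trans hux'.symm) with heq | ⟨h1, h2⟩ | ⟨h1, h2⟩
      · exfalso; linarith [hu.1, hu'.2, heq]
      · exfalso; linarith [hu.1]
      · rw [← hux, h1, hE2pi]
        exact ⟨2*π, ⟨by linarith, le_refl _⟩, rfl⟩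
    · obtain ⟨u', hu', hux'⟩ := fwd _ _ _ _ cov2 x hx ⟨s, hk, hsx⟩
      rcases E_inj' (⟨by linarith [hu.1], hu.2⟩ : u ∈ Icc 0 (2*π))
          (⟨by linarith [hu'.1], by linarith [hu'.2]⟩ : u' ∈ Icc 0 (2*π))
          (hux.trans hux'.symm) with heq | ⟨h1, h2⟩ | ⟨h1, h2⟩
      · exfalso; linarith [hu.1, hu'.2, heq]
      · exfalso; linarith [hu.1]
      · exfalso; linarith [hu'.1]
    · obtain ⟨u', hu', hux'⟩ := fwd _ _ _ _ cov4 x hx ⟨s, hk, hsx⟩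
      rcases E_inj' (⟨by linarith [hu.1], hu.2⟩ : u ∈ Icc 0 (2*π))
          (⟨by linarith [hu'.1], by linarith [hu'.2]⟩ : u' ∈ Icc 0 (2*π))
          (hux.trans hux'.symm) with heq | ⟨h1, h2⟩ | ⟨h1, h2⟩
      · have hu2 : u = ψ := le_antisymm (heq ▸ hu'.2) hu.1
        rw [← hux, hu2, hψ]
        exact ⟨3*π/2, ⟨le_refl _, by linarith⟩, rfl⟩
      · exfalso; linarith [hu.1]
      · exfalso; linarith [hu'.1]
    · exact ⟨s, hk, hsx⟩


lemma E_continuous : Continuous E := by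
  unfold E
  exact Complex.continuous_exp.comp ((Complex.continuous_ofReal).mul continuous_const)

lemma abs_E_sub_sq (x y : ℝ) :
    (‖E x - E y‖)^2 = 4 * Real.sin ((x - y)/2)^2 := by
  have hm : E x - E y = E ((x+y)/2) * (E ((x-y)/2) - E (-((x-y)/2))) := by
    rw [mul_sub, ← E_add, ← E_add]; ring_nf
  have hs : E ((x-y)/2) - E (-((x-y)/2)) = 2 * (Real.sin ((x-y)/2) : ℂ) * Complex.I := by
    rw [E_def', E_def', Real.cos_neg, Real.sin_neg]; push_cast; ring
  rw [hm, hs, norm_mul, abs_E, one_mul, norm_mul, norm_mul, Complex.norm_two,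
    Complex.norm_I, Complex.norm_real, Real.norm_eq_abs, mul_one, mul_pow, _root_.sq_abs]
  ring

/-- inner antiderivative step -/
lemma inner_integral {x c d : ℝ} (hxc : x < c) (hcd : c < d) (hdx : d - x < 2*π) :
    ∫ y in c..d, 1/(4 * Real.sin ((y-x)/2)^2) =
      (1/2) * (Real.cos ((c-x)/2) / Real.sin ((c-x)/2))
        - (1/2) * (Real.cos ((d-x)/2) / Real.sin ((d-x)/2)) := by
  have hπ := Real.pi_pos
  have hsin : ∀ y ∈ Set.Icc c d, Real.sin ((y-x)/2) ≠ 0 := by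
    intro y hy
    have h1 : 0 < (y-x)/2 := by linarith [hy.1]
    have h2 : (y-x)/2 < π := by linarith [hy.2]
    exact ne_of_gt (Real.sin_pos_of_pos_of_lt_pi h1 h2)
  have hderiv : ∀ y ∈ Set.uIcc c d,
      HasDerivAt (fun y => -(1/2) * (Real.cos ((y-x)/2) / Real.sin ((y-x)/2)))
        (1/(4 * Real.sin ((y-x)/2)^2)) y := by
    intro y hy
    rw [Set.uIcc_of_le hcd.le] at hy
    have hu : HasDerivAt (fun y : ℝ => (y - x)/2) (1/2) y := by
      simpa using ((hasDerivAt_id y).sub_const x).div_const 2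
    have hcos : HasDerivAt (fun y : ℝ => Real.cos ((y-x)/2))
        (-Real.sin ((y-x)/2) * (1/2)) y := (Real.hasDerivAt_cos _).comp y hu
    have hsin' : HasDerivAt (fun y : ℝ => Real.sin ((y-x)/2))
        (Real.cos ((y-x)/2) * (1/2)) y := (Real.hasDerivAt_sin _).comp y hu
    have hne := hsin y hy
    have hdiv := hcos.div hsin' hne
    have h2 := hdiv.const_mul (-(1/2) : ℝ)
    have hval : (-(1/2) : ℝ) * ((-Real.sin ((y - x) / 2) * (1 / 2) * Real.sin ((y - x) / 2) -
        Real.cos ((y - x) / 2) * (Real.cos ((y - x) / 2) * (1 / 2))) / Real.sin ((y - x) / 2) ^ 2)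
        = 1/(4 * Real.sin ((y - x) / 2)^2) := by
      have h1 : -Real.sin ((y - x) / 2) * (1 / 2) * Real.sin ((y - x) / 2) -
          Real.cos ((y - x) / 2) * (Real.cos ((y - x) / 2) * (1 / 2))
          = -(1/2) * (Real.sin ((y - x) / 2)^2 + Real.cos ((y - x) / 2)^2) := by ring
      rw [h1, Real.sin_sq_add_cos_sq]
      field_simp
      ring
    rw [hval] at h2
    exact h2
  have hint : IntervalIntegrable (fun y => 1/(4 * Real.sin ((y-x)/2)^2)) volume c d := by
    apply ContinuousOn.intervalIntegrable
    rw [Set.uIcc_of_le hcd.le]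
    apply ContinuousOn.div continuousOn_const
    · exact (continuous_const.mul ((Real.continuous_sin.comp (by continuity)).pow 2)).continuousOn
    · intro y hy
      have := hsin y hy
      positivity
  have := intervalIntegral.integral_eq_sub_of_hasDerivAt hderiv hint
  rw [this]
  ring

/-- outer antiderivative step -/
lemma outer_integral {a b c d : ℝ} (hab : a < b) (hbc : b < c) (hcd : c < d)
    (hda : d - a < 2*π) :
    ∫ x in a..b, ((1/2) * (Real.cos ((c-x)/2) / Real.sin ((c-x)/2))
        - (1/2) * (Real.cos ((d-x)/2) / Real.sin ((d-x)/2))) =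
      (Real.log (Real.sin ((d-b)/2)) - Real.log (Real.sin ((c-b)/2)))
        - (Real.log (Real.sin ((d-a)/2)) - Real.log (Real.sin ((c-a)/2))) := by
  have hπ := Real.pi_pos
  have hsinc : ∀ x ∈ Set.Icc a b, Real.sin ((c-x)/2) ≠ 0 := by
    intro x hx
    exact ne_of_gt (Real.sin_pos_of_pos_of_lt_pi (by linarith [hx.2]) (by linarith [hx.1]))
  have hsind : ∀ x ∈ Set.Icc a b, Real.sin ((d-x)/2) ≠ 0 := by
    intro x hx
    exact ne_of_gt (Real.sin_pos_of_pos_of_lt_pi (by linarith [hx.2]) (by linarith [hx.1]))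
  have hderiv : ∀ x ∈ Set.uIcc a b,
      HasDerivAt (fun x => Real.log (Real.sin ((d-x)/2)) - Real.log (Real.sin ((c-x)/2)))
        ((1/2) * (Real.cos ((c-x)/2) / Real.sin ((c-x)/2))
          - (1/2) * (Real.cos ((d-x)/2) / Real.sin ((d-x)/2))) x := by
    intro x hx
    rw [Set.uIcc_of_le hab.le] at hx
    have hud : HasDerivAt (fun x : ℝ => (d - x)/2) (-1/2) x := by
      simpa using ((hasDerivAt_id x).const_sub d).div_const 2
    have huc : HasDerivAt (fun x : ℝ => (c - x)/2) (-1/2) x := by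
      simpa using ((hasDerivAt_id x).const_sub c).div_const 2
    have hsind' : HasDerivAt (fun x : ℝ => Real.sin ((d-x)/2))
        (Real.cos ((d-x)/2) * (-1/2)) x := (Real.hasDerivAt_sin _).comp x hud
    have hsinc' : HasDerivAt (fun x : ℝ => Real.sin ((c-x)/2))
        (Real.cos ((c-x)/2) * (-1/2)) x := (Real.hasDerivAt_sin _).comp x huc
    have hlogd := (Real.hasDerivAt_log (hsind x hx)).comp x hsind'
    have hlogc := (Real.hasDerivAt_log (hsinc x hx)).comp x hsinc'
    have := hlogd.sub hlogc
    exact this.congr_deriv (by ring)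
  have hint : IntervalIntegrable (fun x => (1/2) * (Real.cos ((c-x)/2) / Real.sin ((c-x)/2))
      - (1/2) * (Real.cos ((d-x)/2) / Real.sin ((d-x)/2))) volume a b := by
    apply ContinuousOn.intervalIntegrable
    rw [Set.uIcc_of_le hab.le]
    apply ContinuousOn.sub
    · apply ContinuousOn.mul continuousOn_const
      exact ContinuousOn.div (Real.continuous_cos.comp (by continuity)).continuousOn
        (Real.continuous_sin.comp (by continuity)).continuousOn hsinc
    · apply ContinuousOn.mul continuousOn_const
      exact ContinuousOn.div (Real.continuous_cos.comp (by continuity)).continuousOn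
        (Real.continuous_sin.comp (by continuity)).continuousOn hsind
  have := intervalIntegral.integral_eq_sub_of_hasDerivAt hderiv hint
  rw [this]


def T : ℝ × ℝ → ℂ × ℂ := fun p => (E p.1, E p.2)

lemma T_measurable : Measurable T :=
  ((E_continuous.comp continuous_fst).prodMk (E_continuous.comp continuous_snd)).measurable

lemma LiouvilleM_eq : LiouvilleM = Measure.map T
    ((volume.restrict (Set.Ico 0 (2*π) ×ˢ Set.Ico 0 (2*π))).withDensity
      (fun p : ℝ × ℝ => ENNReal.ofReal (1 / (‖E p.1 - E p.2‖)^2))) := rfl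

lemma rho_measurable :
    Measurable (fun p : ℝ × ℝ => ENNReal.ofReal (1 / (‖E p.1 - E p.2‖)^2)) := by
  apply Measurable.ennreal_ofReal
  apply Measurable.div measurable_const
  exact ((continuous_norm.comp
    ((E_continuous.comp continuous_fst).sub (E_continuous.comp continuous_snd))).pow 2).measurable

lemma inner_lintegral {a b c d x : ℝ} (hab : a < b) (hbc : b < c) (hcd : c < d)
    (hda : d - a < 2*π) (hx : x ∈ Set.Icc a b) :
    ∫⁻ y in Set.Icc c d, ENNReal.ofReal (1 / (‖E x - E y‖)^2) =
      ENNReal.ofReal ((1/2) * (Real.cos ((c-x)/2) / Real.sin ((c-x)/2))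
        - (1/2) * (Real.cos ((d-x)/2) / Real.sin ((d-x)/2))) := by
  have hπ := Real.pi_pos
  have hsin : ∀ y ∈ Set.Icc c d, 0 < Real.sin ((y-x)/2) := fun y hy =>
    Real.sin_pos_of_pos_of_lt_pi (by linarith [hy.1, hx.2]) (by linarith [hy.2, hx.1])
  have hfg : ∀ y ∈ Set.Icc c d, ENNReal.ofReal (1 / (‖E x - E y‖)^2)
      = ENNReal.ofReal (1/(4 * Real.sin ((y-x)/2)^2)) := by
    intro y hy
    congr 1
    rw [abs_E_sub_sq]
    congr 2
    rw [show (x - y)/2 = -((y-x)/2) by ring, Real.sin_neg]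
    ring
  rw [setLIntegral_congr_fun measurableSet_Icc hfg]
  have hint : IntegrableOn (fun y => 1/(4 * Real.sin ((y-x)/2)^2)) (Set.Icc c d) := by
    apply ContinuousOn.integrableOn_Icc
    apply ContinuousOn.div continuousOn_const
    · exact (continuous_const.mul ((Real.continuous_sin.comp (by continuity)).pow 2)).continuousOn
    · intro y hy; have := hsin y hy; positivity
  rw [← ofReal_integral_eq_lintegral_ofReal hint
      ((ae_restrict_iff' measurableSet_Icc).mpr (Filter.Eventually.of_forall
        (fun y _ => by positivity)))]
  congr 1
  rw [MeasureTheory.integral_Icc_eq_integral_Ioc, ← intervalIntegral.integral_of_le hcd.le]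
  exact inner_integral (by linarith [hx.2]) hcd (by linarith [hx.1])

lemma liouville_box {a b c d : ℝ} (h0 : 0 ≤ a) (hab : a < b) (hbc : b < c) (hcd : c < d)
    (hd2 : d ≤ 2*π) (hda : d - a < 2*π) :
    LiouvilleM (arc a b ×ˢ arc c d) =
      ENNReal.ofReal ((Real.log (Real.sin ((d-b)/2)) - Real.log (Real.sin ((c-b)/2)))
        - (Real.log (Real.sin ((d-a)/2)) - Real.log (Real.sin ((c-a)/2)))) := by
  have hπ := Real.pi_pos
  have harcm : ∀ u v : ℝ, MeasurableSet (arc u v) :=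
    fun u v => (isCompact_Icc.image E_continuous).measurableSet
  have hboxm : MeasurableSet (arc a b ×ˢ arc c d) := (harcm a b).prod (harcm c d)
  have hTm := T_measurable hboxm
  rw [LiouvilleM_eq, Measure.map_apply T_measurable hboxm, withDensity_apply _ hTm,
    Measure.restrict_restrict hTm]
  set N : Set (ℝ × ℝ) := ({(0:ℝ), 2*π} ×ˢ (Set.univ : Set ℝ)) ∪
    ((Set.univ : Set ℝ) ×ˢ {(0:ℝ), 2*π}) with hN
  have hfin : volume ({(0:ℝ), 2*π} : Set ℝ) = 0 :=
    by rw [Set.insert_eq]; exact measure_union_null (measure_singleton _) (measure_singleton _)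
  have hNnull : volume N = 0 := by
    rw [hN]
    apply measure_union_null
    · rw [Measure.volume_eq_prod, Measure.prod_prod, hfin, zero_mul]
    · rw [Measure.volume_eq_prod, Measure.prod_prod, hfin, mul_zero]
  have hmemIcc : ∀ u : ℝ, u ∈ Set.Ico 0 (2*π) → E u ∈ arc a b → u ∈ Set.Icc a b ∨ u = 0 := by
    intro u hu ⟨t, ht, hEt⟩
    rcases E_inj' (⟨hu.1, hu.2.le⟩ : u ∈ Set.Icc 0 (2*π))
        (⟨by linarith [ht.1], by linarith [ht.2]⟩ : t ∈ Set.Icc 0 (2*π)) hEt.symm with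
      heq | ⟨h1, h2⟩ | ⟨h1, h2⟩
    · exact Or.inl (heq ▸ ht)
    · exact Or.inr h1
    · exfalso; linarith [hu.2]
  have hmemIcc2 : ∀ u : ℝ, u ∈ Set.Ico 0 (2*π) → E u ∈ arc c d → u ∈ Set.Icc c d ∨ u = 0 := by
    intro u hu ⟨t, ht, hEt⟩
    rcases E_inj' (⟨hu.1, hu.2.le⟩ : u ∈ Set.Icc 0 (2*π))
        (⟨by linarith [ht.1], by linarith [ht.2]⟩ : t ∈ Set.Icc 0 (2*π)) hEt.symm with
      heq | ⟨h1, h2⟩ | ⟨h1, h2⟩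
    · exact Or.inl (heq ▸ ht)
    · exact Or.inr h1
    · exfalso; linarith [hu.2]
  have hae : (((T ⁻¹' (arc a b ×ˢ arc c d)) ∩ (Set.Ico 0 (2*π) ×ˢ Set.Ico 0 (2*π))) : Set (ℝ × ℝ))
      =ᵐ[volume] ((Set.Icc a b ×ˢ Set.Icc c d : Set (ℝ × ℝ))) := by
    rw [MeasureTheory.ae_eq_set]
    constructor
    · apply measure_mono_null _ hNnull
      rintro ⟨x, y⟩ ⟨⟨⟨hx1, hy1⟩, hx2, hy2⟩, hnot⟩
      rcases hmemIcc x hx2 hx1 with hx3 | hx3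
      · rcases hmemIcc2 y hy2 hy1 with hy3 | hy3
        · exact absurd ⟨hx3, hy3⟩ hnot
        · exact Or.inr ⟨trivial, Or.inl hy3⟩
      · exact Or.inl ⟨Or.inl hx3, trivial⟩
    · apply measure_mono_null _ hNnull
      rintro ⟨x, y⟩ ⟨⟨hx1, hy1⟩, hnot⟩
      by_cases hx2 : x ∈ Set.Ico 0 (2*π)
      · by_cases hy2 : y ∈ Set.Ico 0 (2*π)
        · exact absurd ⟨⟨⟨x, hx1, rfl⟩, ⟨y, hy1, rfl⟩⟩, hx2, hy2⟩ hnot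
        · have hy3 : y = 2*π := by
            rcases lt_or_ge y (2*π) with h' | h'
            · exact absurd ⟨by linarith [hy1.1], h'⟩ hy2
            · linarith [hy1.2]
          exact Or.inr ⟨trivial, Or.inr hy3⟩
      · have hx3 : x = 2*π := by
          rcases lt_or_ge x (2*π) with h' | h'
          · exact absurd ⟨by linarith [hx1.1], h'⟩ hx2
          · linarith [hx1.2]
        exact Or.inl ⟨Or.inr hx3, trivial⟩
  rw [setLIntegral_congr hae]
  rw [Measure.volume_eq_prod, ← Measure.prod_restrict]
  rw [lintegral_prod _ rho_measurable.aemeasurable]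
  have hout : ∀ x ∈ Set.Icc a b,
      (∫⁻ y, ENNReal.ofReal (1 / (‖E x - E y‖)^2) ∂(volume.restrict (Set.Icc c d)))
      = ENNReal.ofReal ((1/2) * (Real.cos ((c-x)/2) / Real.sin ((c-x)/2))
        - (1/2) * (Real.cos ((d-x)/2) / Real.sin ((d-x)/2))) := by
    intro x hx
    exact inner_lintegral hab hbc hcd hda hx
  rw [setLIntegral_congr_fun measurableSet_Icc hout]
  have hsinc : ∀ x ∈ Set.Icc a b, 0 < Real.sin ((c-x)/2) := fun x hx =>
    Real.sin_pos_of_pos_of_lt_pi (by linarith [hx.2]) (by linarith [hx.1])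
  have hsind : ∀ x ∈ Set.Icc a b, 0 < Real.sin ((d-x)/2) := fun x hx =>
    Real.sin_pos_of_pos_of_lt_pi (by linarith [hx.2]) (by linarith [hx.1])
  have hauxc : Continuous (fun x : ℝ => (c - x)/2) := (continuous_const.sub continuous_id).div_const 2
  have hauxd : Continuous (fun x : ℝ => (d - x)/2) := (continuous_const.sub continuous_id).div_const 2
  have hκcont : ContinuousOn (fun x => (1/2) * (Real.cos ((c-x)/2) / Real.sin ((c-x)/2))
      - (1/2) * (Real.cos ((d-x)/2) / Real.sin ((d-x)/2))) (Set.Icc a b) := by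
    apply ContinuousOn.sub
    · apply ContinuousOn.mul continuousOn_const
      exact ContinuousOn.div (Real.continuous_cos.comp hauxc).continuousOn
        (Real.continuous_sin.comp hauxc).continuousOn
        (fun x hx => ne_of_gt (hsinc x hx))
    · apply ContinuousOn.mul continuousOn_const
      exact ContinuousOn.div (Real.continuous_cos.comp hauxd).continuousOn
        (Real.continuous_sin.comp hauxd).continuousOn
        (fun x hx => ne_of_gt (hsind x hx))
  have hκnonneg : ∀ x ∈ Set.Icc a b, 0 ≤ (1/2) * (Real.cos ((c-x)/2) / Real.sin ((c-x)/2))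
      - (1/2) * (Real.cos ((d-x)/2) / Real.sin ((d-x)/2)) := by
    intro x hx
    rw [← inner_integral (by linarith [hx.2]) hcd (by linarith [hx.1])]
    apply intervalIntegral.integral_nonneg hcd.le
    intro y _
    positivity
  rw [← ofReal_integral_eq_lintegral_ofReal (hκcont.integrableOn_Icc)
      ((ae_restrict_iff' measurableSet_Icc).mpr (Filter.Eventually.of_forall hκnonneg))]
  congr 1
  rw [MeasureTheory.integral_Icc_eq_integral_Ioc, ← intervalIntegral.integral_of_le hab.le]
  exact outer_integral hab hbc hcd hda


def Lv (a b c d : ℝ) : ℝ :=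
  (Real.log (Real.sin ((d-b)/2)) - Real.log (Real.sin ((c-b)/2)))
    - (Real.log (Real.sin ((d-a)/2)) - Real.log (Real.sin ((c-a)/2)))

lemma key_identity {ψ : ℝ} (h1 : π < ψ) (h2 : ψ < 2*π) :
    Real.exp (-(Lv 0 (π/2) π ψ)) + Real.exp (-(Lv (π/2) π ψ (2*π))) = 1 ∧
      0 < Lv 0 (π/2) π ψ ∧ 0 < Lv (π/2) π ψ (2*π) := by
  have hπ := Real.pi_pos
  have hs1 : 0 < Real.sin ((ψ - π/2)/2) :=
    Real.sin_pos_of_pos_of_lt_pi (by linarith) (by linarith)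
  have hs0 : 0 < Real.sin (ψ/2) :=
    Real.sin_pos_of_pos_of_lt_pi (by linarith) (by linarith)
  have hs2 : 0 < Real.sin ((ψ - π)/2) :=
    Real.sin_pos_of_pos_of_lt_pi (by linarith) (by linarith)
  have hsq : 0 < Real.sin (π/4) := Real.sin_pos_of_pos_of_lt_pi (by linarith) (by linarith)
  have hs34 : 0 < Real.sin (3*π/4) := Real.sin_pos_of_pos_of_lt_pi (by linarith) (by linarith)
  have hspi2 : Real.sin (π/2) = 1 := Real.sin_pi_div_two
  -- compute the exponentials
  have hA : Real.exp (-(Lv 0 (π/2) π ψ)) =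
      (Real.sin (π/4) * Real.sin (ψ/2)) / Real.sin ((ψ - π/2)/2) := by
    rw [Lv]
    have e1 : (π - π/2)/2 = π/4 := by ring
    have e2 : (ψ - 0)/2 = ψ/2 := by ring
    have e3 : (π - 0)/2 = π/2 := by ring
    rw [e1, e2, e3]
    rw [show -((Real.log (Real.sin ((ψ - π/2)/2)) - Real.log (Real.sin (π/4)))
      - (Real.log (Real.sin (ψ/2)) - Real.log (Real.sin (π/2)))) =
      (Real.log (Real.sin (π/4)) + Real.log (Real.sin (ψ/2)))
      - (Real.log (Real.sin ((ψ - π/2)/2)) + Real.log (Real.sin (π/2))) by ring]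
    rw [Real.exp_sub, Real.exp_add, Real.exp_add, Real.exp_log hsq, Real.exp_log hs0,
      Real.exp_log hs1, Real.exp_log (by rw [hspi2]; norm_num)]
    rw [hspi2, mul_one]
  have hB : Real.exp (-(Lv (π/2) π ψ (2*π))) =
      (Real.sin (3*π/4) * Real.sin ((ψ - π)/2)) / Real.sin ((ψ - π/2)/2) := by
    rw [Lv]
    have e1 : (2*π - π)/2 = π/2 := by ring
    have e2 : (2*π - π/2)/2 = 3*π/4 := by ring
    rw [e1, e2]
    rw [show -((Real.log (Real.sin (π/2)) - Real.log (Real.sin ((ψ - π)/2)))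
      - (Real.log (Real.sin (3*π/4)) - Real.log (Real.sin ((ψ - π/2)/2)))) =
      (Real.log (Real.sin (3*π/4)) + Real.log (Real.sin ((ψ - π)/2)))
      - (Real.log (Real.sin (π/2)) + Real.log (Real.sin ((ψ - π/2)/2))) by ring]
    rw [Real.exp_sub, Real.exp_add, Real.exp_add, Real.exp_log hs34, Real.exp_log hs2,
      Real.exp_log hs1, Real.exp_log (by rw [hspi2]; norm_num)]
    rw [hspi2, one_mul]
  have hsum : Real.exp (-(Lv 0 (π/2) π ψ)) + Real.exp (-(Lv (π/2) π ψ (2*π))) = 1 := by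
    rw [hA, hB]
    have h34 : Real.sin (3*π/4) = Real.sin (π/4) := by
      rw [show 3*π/4 = π - π/4 by ring, Real.sin_pi_sub]
    have hsub1 : Real.sin ((ψ - π/2)/2) =
        Real.sin (ψ/2) * Real.cos (π/4) - Real.cos (ψ/2) * Real.sin (π/4) := by
      rw [show (ψ - π/2)/2 = ψ/2 - π/4 by ring, Real.sin_sub]
    have hsub2 : Real.sin ((ψ - π)/2) = - Real.cos (ψ/2) := by
      rw [show (ψ - π)/2 = ψ/2 - π/2 by ring, Real.sin_sub]
      simp
    have hcossin : Real.cos (π/4) = Real.sin (π/4) := by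
      rw [Real.cos_pi_div_four, Real.sin_pi_div_four]
    rw [h34, hsub2, ← add_div, div_eq_one_iff_eq (ne_of_gt hs1), hsub1, hcossin]
    ring
  refine ⟨hsum, ?_, ?_⟩
  · have hBpos : 0 < Real.exp (-(Lv (π/2) π ψ (2*π))) := Real.exp_pos _
    have : Real.exp (-(Lv 0 (π/2) π ψ)) < 1 := by linarith
    have := Real.exp_lt_one_iff.mp this
    linarith
  · have hApos : 0 < Real.exp (-(Lv 0 (π/2) π ψ)) := Real.exp_pos _
    have : Real.exp (-(Lv (π/2) π ψ (2*π))) < 1 := by linarith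
    have := Real.exp_lt_one_iff.mp this
    linarith

lemma final_helper {t₁ t₂ q r : ℝ} (ht₁ : 0 < t₁) (ht₂ : 0 < t₂) (hq : 0 < q) (hr : 0 < r)
    (h1 : Real.exp (-(t₁*q)) + Real.exp (-(t₁*r)) = 1)
    (h2 : Real.exp (-(t₂*q)) + Real.exp (-(t₂*r)) = 1) : t₁ = t₂ := by
  rcases lt_trichotomy t₁ t₂ with h | h | h
  · exfalso
    have e1 : Real.exp (-(t₂*q)) < Real.exp (-(t₁*q)) := Real.exp_lt_exp.mpr (by nlinarith)
    have e2 : Real.exp (-(t₂*r)) < Real.exp (-(t₁*r)) := Real.exp_lt_exp.mpr (by nlinarith)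
    linarith
  · exact h
  · exfalso
    have e1 : Real.exp (-(t₁*q)) < Real.exp (-(t₂*q)) := Real.exp_lt_exp.mpr (by nlinarith)
    have e2 : Real.exp (-(t₁*r)) < Real.exp (-(t₂*r)) := Real.exp_lt_exp.mpr (by nlinarith)
    linarith


lemma LiouvilleM_outside :
    LiouvilleM ((Metric.sphere (0:ℂ) 1 ×ˢ Metric.sphere (0:ℂ) 1)ᶜ : Set (ℂ × ℂ)) = 0 := by
  have hms : MeasurableSet ((Metric.sphere (0:ℂ) 1 ×ˢ Metric.sphere (0:ℂ) 1)ᶜ : Set (ℂ × ℂ)) :=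
    ((Metric.isClosed_sphere.measurableSet).prod (Metric.isClosed_sphere.measurableSet)).compl
  rw [LiouvilleM_eq, Measure.map_apply T_measurable hms]
  have : T ⁻¹' ((Metric.sphere (0:ℂ) 1 ×ˢ Metric.sphere (0:ℂ) 1)ᶜ : Set (ℂ × ℂ)) = ∅ := by
    rw [Set.eq_empty_iff_forall_notMem]
    rintro ⟨x, y⟩ hmem
    exact hmem ⟨E_mem_sphere x, E_mem_sphere y⟩
  rw [this]
  simp

lemma LiouvilleM_inter (t : Set (ℂ × ℂ)) :
    LiouvilleM t = LiouvilleM (t ∩ (Metric.sphere (0:ℂ) 1 ×ˢ Metric.sphere (0:ℂ) 1)) := by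
  apply le_antisymm
  · calc LiouvilleM t
        ≤ LiouvilleM ((t ∩ (Metric.sphere (0:ℂ) 1 ×ˢ Metric.sphere (0:ℂ) 1)) ∪
            ((Metric.sphere (0:ℂ) 1 ×ˢ Metric.sphere (0:ℂ) 1)ᶜ : Set (ℂ × ℂ))) := by
          apply measure_mono
          intro p hp
          by_cases hs : p ∈ (Metric.sphere (0:ℂ) 1 ×ˢ Metric.sphere (0:ℂ) 1 : Set (ℂ × ℂ))
          · exact Or.inl ⟨hp, hs⟩
          · exact Or.inr hs
      _ ≤ LiouvilleM (t ∩ (Metric.sphere (0:ℂ) 1 ×ˢ Metric.sphere (0:ℂ) 1)) +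
            LiouvilleM ((Metric.sphere (0:ℂ) 1 ×ˢ Metric.sphere (0:ℂ) 1)ᶜ : Set (ℂ × ℂ)) :=
          measure_union_le _ _
      _ = LiouvilleM (t ∩ (Metric.sphere (0:ℂ) 1 ×ˢ Metric.sphere (0:ℂ) 1)) := by
          rw [LiouvilleM_outside, add_zero]
  · exact measure_mono Set.inter_subset_left

lemma box_preimage {h : ℂ → ℂ} {a b c d a' b' c' d' : ℝ}
    (iff1 : ∀ x ∈ Metric.sphere (0:ℂ) 1, (h x ∈ arc a' b' ↔ x ∈ arc a b))
    (iff2 : ∀ x ∈ Metric.sphere (0:ℂ) 1, (h x ∈ arc c' d' ↔ x ∈ arc c d)) :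
    (Prod.map h h ⁻¹' (arc a' b' ×ˢ arc c' d')) ∩
        (Metric.sphere (0:ℂ) 1 ×ˢ Metric.sphere (0:ℂ) 1) = arc a b ×ˢ arc c d := by
  ext ⟨x, y⟩
  constructor
  · rintro ⟨⟨hx1, hy1⟩, hx2, hy2⟩
    exact ⟨(iff1 x hx2).mp hx1, (iff2 y hy2).mp hy1⟩
  · rintro ⟨hx, hy⟩
    have hxs := arc_subset_sphere a b hx
    have hys := arc_subset_sphere c d hy
    exact ⟨⟨(iff1 x hxs).mpr hx, (iff2 y hys).mpr hy⟩, hxs, hys⟩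


lemma map_value {h : ℂ → ℂ}
    (hb : Set.BijOn h (Metric.sphere 0 1) (Metric.sphere 0 1))
    (hc : ContinuousOn h (Metric.sphere 0 1))
    (f1 : h 1 = 1) (fI : h Complex.I = Complex.I) (fm : h (-1) = -1)
    (hmeas : AEMeasurable (Prod.map h h) LiouvilleM) :
    ∃ ψ : ℝ, π < ψ ∧ ψ < 2*π ∧
      Measure.map (Prod.map h h) LiouvilleM (arc 0 (π/2) ×ˢ arc π (3*π/2)) =
        ENNReal.ofReal (Lv 0 (π/2) π ψ) ∧
      Measure.map (Prod.map h h) LiouvilleM (arc (π/2) π ×ˢ arc (3*π/2) (2*π)) =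
        ENNReal.ofReal (Lv (π/2) π ψ (2*π)) := by
  have hπ := Real.pi_pos
  have harcm : ∀ u v : ℝ, MeasurableSet (arc u v) :=
    fun u v => (isCompact_Icc.image E_continuous).measurableSet
  obtain ⟨ψ, hψ1, hψ2, i1, i2, i3, i4⟩ := key_sets hb hc f1 fI fm
  refine ⟨ψ, hψ1, hψ2, ?_, ?_⟩
  · rw [Measure.map_apply_of_aemeasurable hmeas ((harcm _ _).prod (harcm _ _)),
      LiouvilleM_inter, box_preimage i1 i3, Lv.eq_def]
    exact liouville_box (le_refl 0) (by linarith) (by linarith) (by linarith)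
      (by linarith) (by linarith)
  · rw [Measure.map_apply_of_aemeasurable hmeas ((harcm _ _).prod (harcm _ _)),
      LiouvilleM_inter, box_preimage i2 i4, Lv.eq_def]
    exact liouville_box (by linarith) (by linarith) (by linarith) (by linarith)
      (le_refl _) (by linarith)

end RayL
end

open RayL Real

/-- **Rays meet the image of the Liouville map at most once.**
Every positive ray `{t • Ψ : t > 0}` through the origin in the space of Hölder
distributions intersects the image `L(T(D))` of the universal Teichmüller space (the
quasisymmetric circle homeomorphisms fixing `1, i, -1`) under the Liouville map
`h ↦ h_*(L)` in at most one point. -/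
theorem ray_meets_liouville_image_at_most_once
    (Ψ : Measure (ℂ × ℂ)) (hΨ : Ψ ≠ 0) (t₁ t₂ : ℝ) (h₁ h₂ : ℂ → ℂ)
    (ht₁ : 0 < t₁) (ht₂ : 0 < t₂) (hq₁ : QS h₁) (hq₂ : QS h₂)
    (hfix₁ : h₁ 1 = 1 ∧ h₁ Complex.I = Complex.I ∧ h₁ (-1) = -1)
    (hfix₂ : h₂ 1 = 1 ∧ h₂ Complex.I = Complex.I ∧ h₂ (-1) = -1)
    (he₁ : Measure.map (Prod.map h₁ h₁) LiouvilleM = (ENNReal.ofReal t₁) • Ψ)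
    (he₂ : Measure.map (Prod.map h₂ h₂) LiouvilleM = (ENNReal.ofReal t₂) • Ψ) :
    t₁ = t₂ := by
  have hπ := Real.pi_pos
  obtain ⟨hb₁, hc₁, -⟩ := hq₁
  obtain ⟨hb₂, hc₂, -⟩ := hq₂
  obtain ⟨hf11, hf12, hf13⟩ := hfix₁
  obtain ⟨hf21, hf22, hf23⟩ := hfix₂
  have ht₁0 : ENNReal.ofReal t₁ ≠ 0 := by
    simp only [ne_eq, ENNReal.ofReal_eq_zero, not_le]; exact ht₁
  have ht₂0 : ENNReal.ofReal t₂ ≠ 0 := by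
    simp only [ne_eq, ENNReal.ofReal_eq_zero, not_le]; exact ht₂
  have hameas : ∀ (h : ℂ → ℂ) (t : ℝ), 0 < t →
      Measure.map (Prod.map h h) LiouvilleM = (ENNReal.ofReal t) • Ψ →
      AEMeasurable (Prod.map h h) LiouvilleM := by
    intro h t ht he
    by_contra hcon
    rw [Measure.map_of_not_aemeasurable hcon] at he
    apply hΨ
    have h0 : (0 : Measure (ℂ × ℂ)) Set.univ = ((ENNReal.ofReal t) • Ψ) Set.univ := by rw [he]
    rw [Measure.smul_apply, smul_eq_mul] at h0
    have hz : Ψ Set.univ = 0 := by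
      rcases mul_eq_zero.mp h0.symm with h' | h'
      · exact absurd h' (by simp only [ne_eq, ENNReal.ofReal_eq_zero, not_le]; exact ht)
      · exact h'
    exact Measure.measure_univ_eq_zero.mp hz
  obtain ⟨ψ₁, hψ₁a, hψ₁b, hv₁X, hv₁Y⟩ :=
    map_value hb₁ hc₁ hf11 hf12 hf13 (hameas h₁ t₁ ht₁ he₁)
  obtain ⟨ψ₂, hψ₂a, hψ₂b, hv₂X, hv₂Y⟩ :=
    map_value hb₂ hc₂ hf21 hf22 hf23 (hameas h₂ t₂ ht₂ he₂)
  obtain ⟨hid₁, hXpos₁, hYpos₁⟩ := key_identity hψ₁a hψ₁b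
  obtain ⟨hid₂, hXpos₂, hYpos₂⟩ := key_identity hψ₂a hψ₂b
  rw [he₁, Measure.smul_apply, smul_eq_mul] at hv₁X hv₁Y
  rw [he₂, Measure.smul_apply, smul_eq_mul] at hv₂X hv₂Y
  -- Ψ of the two boxes is finite and positive
  have hfin : ∀ (s : Set (ℂ × ℂ)) (t L : ℝ), 0 < t → 0 < L →
      ENNReal.ofReal t * Ψ s = ENNReal.ofReal L → Ψ s ≠ ⊤ ∧ Ψ s ≠ 0 := by
    intro s t L ht hL heq
    constructor
    · intro htop
      rw [htop, ENNReal.mul_top (by simp only [ne_eq, ENNReal.ofReal_eq_zero, not_le]; exact ht)]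
        at heq
      exact (ENNReal.ofReal_ne_top) heq.symm
    · intro h0
      rw [h0, mul_zero] at heq
      have := ENNReal.ofReal_eq_zero.mp heq.symm
      linarith
  obtain ⟨hQtop, hQ0⟩ := hfin _ t₁ _ ht₁ hXpos₁ hv₁X
  obtain ⟨hQ'top, hQ'0⟩ := hfin _ t₁ _ ht₁ hYpos₁ hv₁Y
  set q : ℝ := (Ψ (arc 0 (π/2) ×ˢ arc π (3*π/2))).toReal with hqdef
  set r : ℝ := (Ψ (arc (π/2) π ×ˢ arc (3*π/2) (2*π))).toReal with hrdef
  have hqpos : 0 < q := ENNReal.toReal_pos hQ0 hQtop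
  have hrpos : 0 < r := ENNReal.toReal_pos hQ'0 hQ'top
  have hQeq : Ψ (arc 0 (π/2) ×ˢ arc π (3*π/2)) = ENNReal.ofReal q :=
    (ENNReal.ofReal_toReal hQtop).symm
  have hQ'eq : Ψ (arc (π/2) π ×ˢ arc (3*π/2) (2*π)) = ENNReal.ofReal r :=
    (ENNReal.ofReal_toReal hQ'top).symm
  rw [hQeq, ← ENNReal.ofReal_mul ht₁.le] at hv₁X
  rw [hQ'eq, ← ENNReal.ofReal_mul ht₁.le] at hv₁Y
  rw [hQeq, ← ENNReal.ofReal_mul ht₂.le] at hv₂X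
  rw [hQ'eq, ← ENNReal.ofReal_mul ht₂.le] at hv₂Y
  have eX₁ : Lv 0 (π/2) π ψ₁ = t₁ * q :=
    (ENNReal.ofReal_eq_ofReal_iff (le_of_lt hXpos₁) (by positivity)).mp hv₁X.symm
  have eY₁ : Lv (π/2) π ψ₁ (2*π) = t₁ * r :=
    (ENNReal.ofReal_eq_ofReal_iff (le_of_lt hYpos₁) (by positivity)).mp hv₁Y.symm
  have eX₂ : Lv 0 (π/2) π ψ₂ = t₂ * q :=
    (ENNReal.ofReal_eq_ofReal_iff (le_of_lt hXpos₂) (by positivity)).mp hv₂X.symm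
  have eY₂ : Lv (π/2) π ψ₂ (2*π) = t₂ * r :=
    (ENNReal.ofReal_eq_ofReal_iff (le_of_lt hYpos₂) (by positivity)).mp hv₂Y.symm
  rw [eX₁, eY₁] at hid₁
  rw [eX₂, eY₂] at hid₂
  exact final_helper ht₁ ht₂ hqpos hrpos hid₁ hid₂
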